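/- arXiv:2009.12257 — 7 statements merged into one kernel-verified Lean document; each statement's English description precedes it below -/
import Mathlib

section
/- Let G be a group, n a natural number, and s : Fin (n+1) → G a tuple of elements of G. The following are equivalent: (1) the elements (s i)⁻¹ * (s (i+1)) for 0 ≤ i < n pairwise commute; (2) the subgroup of G generated by the set {(s i)⁻¹ * (s j) : 0 ≤ i, j ≤ n} is commutative; (3) there exist an element x ∈ G and a commutative subgroup A of G such that s i ∈ x • A (the left coset of A by x) for every i. -/
open Pointwise

private lemma closure_comm_of_pairwise {G : Type*} [Group G] {S : Set G}
    (h : ∀ a ∈ S, ∀ b ∈ S, Commute a b) : IsMulCommutative (Subgroup.closure S) := by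
  constructor
  constructor
  rintro ⟨a, ha⟩ ⟨b, hb⟩
  ext
  simp only [Subgroup.coe_mul]
  refine Subgroup.closure_induction₂ (p := fun x y _ _ => Commute x y)
    (fun x y hx hy => h x hx y hy)
    (fun x _ => Commute.one_left x) (fun x _ => Commute.one_right x)
    (fun x y z _ _ _ h1 h2 => h1.mul_left h2)
    (fun y z x _ _ _ h1 h2 => h1.mul_right h2)
    (fun x y _ _ h => h.inv_left) (fun x y _ _ h => h.inv_right) ha hb

/-- Lemma 2.2 (Lemma `lem:aff`): for a tuple `s : Fin (n+1) → G` in a group `G`, the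
following are equivalent:
(1) the consecutive difference elements `(s i)⁻¹ * s (i+1)` pairwise commute;
(2) the subgroup generated by all `(s i)⁻¹ * s j` is commutative;
(3) all `s i` lie in a single left coset `x • A` of some commutative subgroup `A`. -/
theorem affinely_commutative_tfae {G : Type*} [Group G] (n : ℕ) (s : Fin (n + 1) → G) :
    List.TFAE
      [∀ i j : Fin n,
          Commute ((s i.castSucc)⁻¹ * s i.succ) ((s j.castSucc)⁻¹ * s j.succ),
        IsMulCommutative (Subgroup.closure {g : G | ∃ i j : Fin (n + 1), g = (s i)⁻¹ * s j}),
        ∃ (x : G) (A : Subgroup G), IsMulCommutative A ∧ ∀ i : Fin (n + 1), s i ∈ x • (A : Set G)] := by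
  tfae_have 1 → 2
  · intro h
    set D : Set G := {g : G | ∃ i : Fin n, g = (s i.castSucc)⁻¹ * s i.succ} with hD
    have hDcomm : IsMulCommutative (Subgroup.closure D) := by
      apply closure_comm_of_pairwise
      rintro a ⟨i, rfl⟩ b ⟨j, rfl⟩
      exact h i j
    have key : ∀ i : Fin (n + 1), (s 0)⁻¹ * s i ∈ Subgroup.closure D := by
      intro i
      induction i using Fin.induction with
      | zero => simpa using one_mem _
      | succ i ih =>
        have : (s 0)⁻¹ * s i.succ = ((s 0)⁻¹ * s i.castSucc) * ((s i.castSucc)⁻¹ * s i.succ) := by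
          group
        rw [this]
        exact mul_mem ih (Subgroup.subset_closure ⟨i, rfl⟩)
    have hsub : Subgroup.closure {g : G | ∃ i j : Fin (n + 1), g = (s i)⁻¹ * s j}
        ≤ Subgroup.closure D := by
      rw [Subgroup.closure_le]
      rintro g ⟨i, j, rfl⟩
      have : (s i)⁻¹ * s j = ((s 0)⁻¹ * s i)⁻¹ * ((s 0)⁻¹ * s j) := by group
      rw [this]
      exact mul_mem (inv_mem (key i)) (key j)
    constructor; constructor
    rintro ⟨a, ha⟩ ⟨b, hb⟩
    ext
    simpa using Subgroup.mul_comm_of_mem_isMulCommutative _ (hsub ha) (hsub hb)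
  tfae_have 2 → 3
  · intro h
    refine ⟨s 0, _, h, fun i => ?_⟩
    refine ⟨(s 0)⁻¹ * s i, Subgroup.subset_closure ⟨0, i, rfl⟩, by simp [smul_eq_mul]⟩
  tfae_have 3 → 1
  · rintro ⟨x, A, hA, hs⟩ i j
    have mem : ∀ k : Fin n, (s k.castSucc)⁻¹ * s k.succ ∈ A := by
      intro k
      obtain ⟨a, ha, hae⟩ := hs k.castSucc
      obtain ⟨b, hb, hbe⟩ := hs k.succ
      have : (s k.castSucc)⁻¹ * s k.succ = a⁻¹ * b := by rw [← hae, ← hbe]; simp [smul_eq_mul]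
      rw [this]
      exact mul_mem (inv_mem ha) hb
    exact Subgroup.mul_comm_of_mem_isMulCommutative A (mem i) (mem j)
  tfae_finish
end

section
/- Let n be a natural number and let T = (Fin n → Circle) be the n-dimensional torus with the product topology. If φ : T → T is a continuous group automorphism such that the map t ↦ t⁻¹ * φ(t) is null-homotopic as a continuous map from T to T, then φ is the identity automorphism. -/
open Complex Set

noncomputable section

instance : ConnectedSpace Circle :=
  Function.Surjective.connectedSpace (fun z => ⟨_, Circle.exp_arg z⟩) Circle.exp.continuous

lemma Circle.exp_sum {ι : Type*} (s : Finset ι) (f : ι → ℝ) :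
    Circle.exp (∑ i ∈ s, f i) = ∏ i ∈ s, Circle.exp (f i) := by
  classical
  induction s using Finset.cons_induction with
  | empty => simp [Circle.exp_zero]
  | cons i s hi ih => rw [Finset.sum_cons, Finset.prod_cons, Circle.exp_add, ih]

lemma Circle.exp_neg' (r : ℝ) : Circle.exp (-r) = (Circle.exp r)⁻¹ := by
  rw [eq_inv_iff_mul_eq_one, ← Circle.exp_add, neg_add_cancel, Circle.exp_zero]

lemma mem_slitPlane_of_dist_lt_two {z w : Circle} (h : dist z w < 2) :
    ((z / w : Circle) : ℂ) ∈ Complex.slitPlane := by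
  by_contra hns
  rw [Circle.coe_div, Complex.mem_slitPlane_iff] at hns
  push_neg at hns
  obtain ⟨hre, him⟩ := hns
  have habs : ‖(z : ℂ) / w‖ = 1 := by
    rw [← Circle.coe_div]; exact Circle.norm_coe _
  -- deduce that z / w = -1 as a complex number
  have hu : ((z : ℂ) / w) = -1 := by
    have h1 : ((z : ℂ) / w).re ^ 2 = 1 := by
      have := Complex.sq_norm ((z : ℂ) / w)
      rw [habs] at this
      rw [Complex.normSq_apply, him] at this
      nlinarith [this]
    have : ((z : ℂ) / w).re = -1 := by nlinarith [h1, hre]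
    apply Complex.ext <;> simp [this, him]
  have hz : (z : ℂ) = -(w : ℂ) := by
    have hw : (w : ℂ) ≠ 0 := Circle.coe_ne_zero w
    field_simp at hu
    linear_combination hu
  have : dist z w = 2 := by
    have : dist (z : ℂ) (w : ℂ) = 2 := by
      rw [Complex.dist_eq, hz]
      have : -(w : ℂ) - w = -(2 * w) := by ring
      rw [this]
      simp [Circle.norm_coe]
    exact this
  linarith

/-- A nullhomotopic map from a compact metric space to the circle has a continuous
logarithm. -/
lemma exists_log_of_nullhomotopic {X : Type*} [MetricSpace X] [CompactSpace X]
    (f : C(X, Circle)) (hf : f.Nullhomotopic) :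
    ∃ G : X → ℝ, Continuous G ∧ ∀ x, Circle.exp (G x) = f x := by
  obtain ⟨c, ⟨H⟩⟩ := hf
  -- uniform continuity
  have hUC : UniformContinuous fun p : unitInterval × X => H p :=
    CompactSpace.uniformContinuous_of_continuous H.continuous
  obtain ⟨δ, hδpos, hδ⟩ := Metric.uniformContinuous_iff.mp hUC 1 one_pos
  obtain ⟨m, hm⟩ := exists_nat_one_div_lt hδpos
  set k : ℕ := m + 1 with hk
  have hkpos : (0:ℝ) < k := by exact_mod_cast Nat.succ_pos m
  -- partition points
  set t : ℕ → unitInterval := fun i => Set.projIcc 0 1 zero_le_one ((i : ℝ) / k) with ht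
  have ht0 : t 0 = 0 := by
    simp only [ht, Nat.cast_zero, zero_div]
    rw [Set.projIcc_left]
    rfl
  have htk : t k = 1 := by
    simp only [ht]
    rw [div_self (ne_of_gt hkpos), Set.projIcc_right]
    rfl
  have htd : ∀ i, dist (t (i + 1)) (t i) < δ := by
    intro i
    have hlip := (LipschitzWith.projIcc (zero_le_one (α := ℝ))).dist_le_mul
      (((i : ℝ) + 1) / k) ((i : ℝ) / k)
    have : dist (((i : ℝ) + 1) / k) ((i : ℝ) / k) = 1 / k := by
      rw [Real.dist_eq, div_sub_div_same, add_sub_cancel_left]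
      exact abs_of_pos (one_div_pos.mpr hkpos)
    calc dist (t (i + 1)) (t i) ≤ 1 / k := by
          simpa [ht, this, Nat.cast_add, Nat.cast_one] using hlip
      _ < δ := by simpa [hk] using hm
  set F : ℕ → X → Circle := fun i x => H (t i, x) with hF
  have hFc : ∀ i, Continuous (F i) :=
    fun i => H.continuous.comp (continuous_const.prodMk continuous_id)
  have hFd : ∀ i x, dist (F (i + 1) x) (F i x) < 1 := by
    intro i x
    apply hδ
    rw [Prod.dist_eq]
    rw [max_lt_iff]
    refine ⟨htd i, by simpa [dist_self] using hδpos⟩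
  have hslit : ∀ i x, ((F (i + 1) x / F i x : Circle) : ℂ) ∈ Complex.slitPlane := by
    intro i x
    exact mem_slitPlane_of_dist_lt_two (lt_trans (hFd i x) one_lt_two)
  -- the logarithm
  refine ⟨fun x => Complex.arg c - ∑ i ∈ Finset.range k,
      Complex.arg ((F (i + 1) x / F i x : Circle) : ℂ), ?_, ?_⟩
  · apply Continuous.sub continuous_const
    apply continuous_finset_sum
    intro i _
    rw [continuous_iff_continuousAt]
    intro x
    have hc : ContinuousAt (fun y => ((F (i + 1) y / F i y : Circle) : ℂ)) x :=
      (((hFc (i + 1)).div' (hFc i)).subtype_val).continuousAt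
    exact ContinuousAt.comp (f := fun y => ((F (i + 1) y / F i y : Circle) : ℂ))
      (Complex.continuousAt_arg (hslit i x)) hc
  · intro x
    beta_reduce
    have hexp : ∀ i, Circle.exp (Complex.arg ((F (i + 1) x / F i x : Circle) : ℂ))
        = F (i + 1) x / F i x := fun i => Circle.exp_arg _
    rw [sub_eq_add_neg, Circle.exp_add]
    have : Circle.exp (-∑ i ∈ Finset.range k,
        Complex.arg ((F (i + 1) x / F i x : Circle) : ℂ))
        = (∏ i ∈ Finset.range k, (F (i + 1) x / F i x))⁻¹ := by
      rw [Circle.exp_neg', Circle.exp_sum]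
      congr 1
      exact Finset.prod_congr rfl fun i _ => hexp i
    rw [this, Finset.prod_range_div (fun i => F i x) k]
    have hF0 : F 0 x = f x := by simp only [hF, ht0]; exact H.apply_zero x
    have hFk : F k x = c := by simp only [hF, htk]; exact H.apply_one x
    rw [hF0, hFk, Circle.exp_arg, inv_div]
    exact mul_div_cancel c (f x)

/-- A nullhomotopic continuous homomorphism from the torus to the circle is trivial. -/
lemma hom_trivial {n : ℕ} (ψ : C(Fin n → Circle, Circle))
    (hmul : ∀ s t, ψ (s * t) = ψ s * ψ t) (hnull : ψ.Nullhomotopic) :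
    ∀ t, ψ t = 1 := by
  obtain ⟨G, hGc, hG⟩ := exists_log_of_nullhomotopic ψ hnull
  have hψ1 : ψ 1 = 1 := by
    have := hmul 1 1
    rw [mul_one] at this
    exact (left_eq_mul.mp this)
  set G0 : (Fin n → Circle) → ℝ := fun x => G x - G 1 with hG0
  have hG0c : Continuous G0 := hGc.sub continuous_const
  have hG0exp : ∀ x, Circle.exp (G0 x) = ψ x := by
    intro x
    rw [hG0]
    simp only
    rw [sub_eq_add_neg, Circle.exp_add, Circle.exp_neg', hG x, hG 1, hψ1, inv_one, mul_one]
  have hG01 : G0 1 = 0 := by simp [hG0]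
  -- the defect is a continuous map into a countable set, hence constant
  set D : ((Fin n → Circle) × (Fin n → Circle)) → ℝ :=
    fun p => G0 (p.1 * p.2) - G0 p.1 - G0 p.2 with hD
  have hDc : Continuous D :=
    ((hG0c.comp (continuous_fst.mul continuous_snd)).sub
      (hG0c.comp continuous_fst)).sub (hG0c.comp continuous_snd)
  have hDmem : ∀ p, ∃ j : ℤ, D p = j * (2 * Real.pi) := by
    intro p
    rw [← Circle.exp_eq_one]
    rw [hD]
    simp only
    rw [sub_eq_add_neg, sub_eq_add_neg, Circle.exp_add, Circle.exp_add, Circle.exp_neg',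
      Circle.exp_neg', hG0exp, hG0exp, hG0exp, hmul]
    simp [mul_comm, mul_left_comm, mul_assoc]
  have hD0 : D (1, 1) = 0 := by simp [hD, hG01]
  have hDzero : ∀ p, D p = 0 := by
    intro p
    by_contra hne
    have hconn : IsPreconnected (Set.range D) :=
      (isPreconnected_range hDc)
    have h0mem : (0 : ℝ) ∈ Set.range D := ⟨(1, 1), hD0⟩
    have hpmem : D p ∈ Set.range D := ⟨p, rfl⟩
    set S : Set ℝ := Set.range (fun j : ℤ => (j : ℝ) * (2 * Real.pi)) with hS
    have hsub : Set.range D ⊆ S := by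
      rintro _ ⟨q, rfl⟩
      obtain ⟨j, hj⟩ := hDmem q
      exact ⟨j, hj.symm⟩
    have hSmeas : MeasureTheory.volume S = 0 :=
      (Set.countable_range _).measure_zero _
    rcases lt_or_gt_of_ne hne with hlt | hgt
    · have : Set.Icc (D p) 0 ⊆ Set.range D := hconn.Icc_subset hpmem h0mem
      have hv : MeasureTheory.volume (Set.Icc (D p) 0) = 0 :=
        le_antisymm (hSmeas ▸ MeasureTheory.measure_mono (this.trans hsub)) zero_le
      rw [Real.volume_Icc] at hv
      simp only [ENNReal.ofReal_eq_zero, sub_nonpos] at hv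
      linarith
    · have : Set.Icc 0 (D p) ⊆ Set.range D := hconn.Icc_subset h0mem hpmem
      have hv : MeasureTheory.volume (Set.Icc 0 (D p)) = 0 :=
        le_antisymm (hSmeas ▸ MeasureTheory.measure_mono (this.trans hsub)) zero_le
      rw [Real.volume_Icc] at hv
      simp only [ENNReal.ofReal_eq_zero, sub_nonpos] at hv
      linarith
  have hadd : ∀ s t, G0 (s * t) = G0 s + G0 t := by
    intro s t
    have := hDzero (s, t)
    rw [hD] at this
    simp only at this
    linarith
  -- boundedness kills the homomorphism
  obtain ⟨C, hC⟩ := (isCompact_range hG0c).isBounded.subset_closedBall 0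
  have hbound : ∀ x, |G0 x| ≤ C := by
    intro x
    have := hC ⟨x, rfl⟩
    rwa [Metric.mem_closedBall, Real.dist_eq, sub_zero] at this
  have hpow : ∀ (x : Fin n → Circle) (j : ℕ), G0 (x ^ j) = j * G0 x := by
    intro x j
    induction j with
    | zero => simpa using hG01
    | succ j ih => rw [pow_succ, hadd, ih]; push_cast; ring
  have hG0zero : ∀ x, G0 x = 0 := by
    intro x
    by_contra hne
    obtain ⟨j, hj⟩ := exists_nat_gt (C / |G0 x|)
    have habs : (0:ℝ) < |G0 x| := abs_pos.mpr hne
    have : C < j * |G0 x| := (div_lt_iff₀ habs).mp hj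
    have h2 : |G0 (x ^ j)| = j * |G0 x| := by
      rw [hpow, abs_mul, Nat.abs_cast]
    have := hbound (x ^ j)
    rw [h2] at this
    linarith
  intro x
  rw [← hG0exp x, hG0zero x, Circle.exp_zero]

/-- A continuous automorphism `φ` of the `n`-torus such that `t ↦ t⁻¹ * φ t` is
null-homotopic is the identity. (This is the key step showing that a homotopy abelian
compact Lie group acts trivially on its maximal torus.) -/
theorem torus_automorphism_eq_id_of_nullhomotopic (n : ℕ)
    (φ : (Fin n → Circle) ≃* (Fin n → Circle)) (hφ : Continuous φ)
    (h : ContinuousMap.Nullhomotopic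
      (⟨fun t : Fin n → Circle => t⁻¹ * φ t, continuous_inv.mul hφ⟩ :
        C(Fin n → Circle, Fin n → Circle))) :
    φ = MulEquiv.refl (Fin n → Circle) := by
  have key : ∀ (j : Fin n) (t : Fin n → Circle), (t⁻¹ * φ t) j = 1 := by
    intro j
    set ψ : C(Fin n → Circle, Circle) :=
      (⟨fun g : Fin n → Circle => g j, continuous_apply j⟩ : C(Fin n → Circle, Circle)).comp
        (⟨fun t : Fin n → Circle => t⁻¹ * φ t, continuous_inv.mul hφ⟩) with hψ
    have hnull : ψ.Nullhomotopic := h.comp_right _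
    have hmul : ∀ s t, ψ (s * t) = ψ s * ψ t := by
      intro s t
      simp only [hψ, ContinuousMap.comp_apply, ContinuousMap.coe_mk]
      rw [map_mul, mul_inv]
      rw [show s⁻¹ * t⁻¹ * (φ s * φ t) = (s⁻¹ * φ s) * (t⁻¹ * φ t) by
        rw [mul_mul_mul_comm]]
      rfl
    exact fun t => hom_trivial ψ hmul hnull t
  ext t j
  have := key j t
  rw [Pi.mul_apply, Pi.inv_apply] at this
  have : φ t j = t j := by
    rw [inv_mul_eq_one] at this
    exact this.symm
  simp [this]
end
end

section
/- Let G be a group and T a subgroup of G contained in the center of G such that the quotient group G ⧸ T is finite. Then the commutator subgroup ⁅G, G⁆ (the subgroup generated by all commutators x⁻¹y⁻¹xy) is finitely generated. -/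
open scoped commutatorElement

lemma commutatorElement_mul_central {G : Type*} [Group G] (x y t s : G)
    (ht : t ∈ Subgroup.center G) (hs : s ∈ Subgroup.center G) :
    ⁅x * t, y * s⁆ = ⁅x, y⁆ := by
  have htc : ∀ g : G, t * g = g * t := fun g => (Subgroup.mem_center_iff.mp ht g).symm
  have hsc : ∀ g : G, s * g = g * s := fun g => (Subgroup.mem_center_iff.mp hs g).symm
  rw [commutatorElement_def, commutatorElement_def]
  calc (x * t) * (y * s) * (x * t)⁻¹ * (y * s)⁻¹
      = x * (t * (y * s) * t⁻¹) * x⁻¹ * (y * s)⁻¹ := by group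
    _ = x * (y * s) * x⁻¹ * (y * s)⁻¹ := by rw [htc (y * s)]; group
    _ = x * y * (s * x⁻¹ * s⁻¹) * y⁻¹ := by group
    _ = x * y * x⁻¹ * y⁻¹ := by rw [hsc x⁻¹]; group

/-- If `T` is a central subgroup of `G` with finite quotient `G ⧸ T`, then the commutator
subgroup `⁅G, G⁆` is finitely generated. -/
theorem commutator_fg_of_finite_quotient_by_central {G : Type*} [Group G] (T : Subgroup G)
    (hT : T ≤ Subgroup.center G) (hfin : Finite (G ⧸ T)) :
    (commutator G).FG := by
  have key : ∀ x y : G, ⁅x, y⁆ =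
      ⁅(QuotientGroup.mk x : G ⧸ T).out, (QuotientGroup.mk y : G ⧸ T).out⁆ := by
    intro x y
    have hx : x⁻¹ * (QuotientGroup.mk x : G ⧸ T).out ∈ T := by
      rw [← QuotientGroup.eq]
      exact (QuotientGroup.out_eq' _).symm
    have hy : y⁻¹ * (QuotientGroup.mk y : G ⧸ T).out ∈ T := by
      rw [← QuotientGroup.eq]
      exact (QuotientGroup.out_eq' _).symm
    have hxo : (QuotientGroup.mk x : G ⧸ T).out
        = x * (x⁻¹ * (QuotientGroup.mk x : G ⧸ T).out) := by group
    have hyo : (QuotientGroup.mk y : G ⧸ T).out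
        = y * (y⁻¹ * (QuotientGroup.mk y : G ⧸ T).out) := by group
    rw [hxo, hyo, commutatorElement_mul_central x y _ _ (hT hx) (hT hy)]
  have hfinset : Finite (commutatorSet G) := by
    apply Set.Finite.to_subtype
    apply Set.Finite.subset
      (Set.finite_range (fun p : (G ⧸ T) × (G ⧸ T) => ⁅p.1.out, p.2.out⁆))
    rintro _ ⟨x, y, rfl⟩
    exact ⟨(QuotientGroup.mk x, QuotientGroup.mk y), (key x y).symm⟩
  exact (Group.fg_iff_subgroup_fg (commutator G)).mp inferInstance
end

section
/- Let G be a topological group and T a subgroup of G contained in the center of G such that T is open, T is path-connected, and the quotient group G ⧸ T is finite and commutative. Then the commutator map c : G × G → G, c(x,y) = x⁻¹y⁻¹xy, is null-homotopic as a continuous map, i.e. G is homotopy abelian. -/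
open unitInterval


/-- The commutator map `c : G × G → G`, `c(x, y) = x⁻¹y⁻¹xy`, as a continuous map. -/
def commutatorMap (G : Type*) [Group G] [TopologicalSpace G] [IsTopologicalGroup G] :
    C(G × G, G) :=
  ⟨fun p => p.1⁻¹ * p.2⁻¹ * p.1 * p.2, by continuity⟩

/-- If a topological group `G` has an open, path-connected central subgroup `T` such that
the quotient `G ⧸ T` is finite and commutative, then `G` is homotopy abelian, i.e. its
commutator map is null-homotopic. -/
theorem nullhomotopic_commutatorMap_of_central_open_pathConnected {G : Type*} [Group G]
    [TopologicalSpace G] [IsTopologicalGroup G] (T : Subgroup G) [T.Normal]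
    (hT : T ≤ Subgroup.center G) (hopen : IsOpen (T : Set G))
    (hpath : IsPathConnected (T : Set G)) (hfin : Finite (G ⧸ T))
    (hcomm : ∀ a b : G ⧸ T, a * b = b * a) :
    (commutatorMap G).Nullhomotopic := by
  classical
  have h1 : (1 : G) ∈ (T : Set G) := T.one_mem
  -- the commutator takes values in T
  have hcT : ∀ p : G × G, commutatorMap G p ∈ T := by
    intro p
    have hq : ((p.1⁻¹ * p.2⁻¹ * p.1 * p.2 : G) : G ⧸ T) = 1 := by
      have : ((p.1⁻¹ * p.2⁻¹ * p.1 * p.2 : G) : G ⧸ T)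
          = (p.1 : G ⧸ T)⁻¹ * (p.2 : G ⧸ T)⁻¹ * (p.1 : G ⧸ T) * (p.2 : G ⧸ T) := rfl
      rw [this, mul_assoc, hcomm (p.1 : G ⧸ T) (p.2 : G ⧸ T)]
      group
    exact (QuotientGroup.eq_one_iff _).mp hq
  -- the commutator is constant on cosets of T × T
  have hconst : ∀ p q : G × G, p.1⁻¹ * q.1 ∈ T → p.2⁻¹ * q.2 ∈ T →
      commutatorMap G q = commutatorMap G p := by
    rintro ⟨x, y⟩ ⟨x', y'⟩ ht hs
    have htc : ∀ g : G, g * (x⁻¹ * x') = (x⁻¹ * x') * g := fun g =>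
      ((Subgroup.mem_center_iff.mp (hT ht)) g)
    have hsc : ∀ g : G, g * (y⁻¹ * y') = (y⁻¹ * y') * g := fun g =>
      ((Subgroup.mem_center_iff.mp (hT hs)) g)
    set t := x⁻¹ * x' with htdef
    set s := y⁻¹ * y' with hsdef
    have hx' : x' = x * t := by rw [htdef]; group
    have hy' : y' = y * s := by rw [hsdef]; group
    show x'⁻¹ * y'⁻¹ * x' * y' = x⁻¹ * y⁻¹ * x * y
    rw [hx', hy', htc x, hsc y]
    calc (t * x)⁻¹ * (s * y)⁻¹ * (t * x) * (s * y)
        = x⁻¹ * t⁻¹ * y⁻¹ * ((s⁻¹ * t) * (x * s) * y) := by group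
      _ = x⁻¹ * t⁻¹ * y⁻¹ * ((t * s⁻¹) * (s * x) * y) := by rw [htc s⁻¹, hsc x]
      _ = x⁻¹ * t⁻¹ * ((y⁻¹ * t) * (x * y)) := by group
      _ = x⁻¹ * t⁻¹ * ((t * y⁻¹) * (x * y)) := by rw [htc y⁻¹]
      _ = x⁻¹ * y⁻¹ * x * y := by group
  -- paths from 1 to elements of T
  let φ : G → I → G := fun g u =>
    if h : g ∈ T then (hpath.joinedIn 1 h1 g h).somePath u else 1
  have hφcont : ∀ g : G, Continuous (φ g) := by
    intro g
    by_cases h : g ∈ T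
    · simpa [φ, h] using (hpath.joinedIn 1 h1 g h).somePath.continuous
    · simp only [φ, h, dif_neg, not_false_iff]
      exact continuous_const
  have hφ0 : ∀ g : G, φ g 0 = 1 := by
    intro g
    by_cases h : g ∈ T <;> simp [φ, h]
  have hφ1 : ∀ g : G, g ∈ T → φ g 1 = g := by
    intro g h
    simp [φ, h]
  -- the homotopy
  have hcont : Continuous (fun sp : I × (G × G) => φ (commutatorMap G sp.2) sp.1) := by
    rw [continuous_iff_continuousAt]
    rintro ⟨u, p⟩
    have hUopen : IsOpen {q : G × G | p.1⁻¹ * q.1 ∈ T ∧ p.2⁻¹ * q.2 ∈ T} := by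
      have h1' : IsOpen {q : G × G | p.1⁻¹ * q.1 ∈ T} :=
        (hopen.preimage (continuous_const.mul continuous_fst))
      have h2' : IsOpen {q : G × G | p.2⁻¹ * q.2 ∈ T} :=
        (hopen.preimage (continuous_const.mul continuous_snd))
      exact h1'.inter h2'
    have hmem : {sq : I × (G × G) | p.1⁻¹ * sq.2.1 ∈ T ∧ p.2⁻¹ * sq.2.2 ∈ T} ∈
        nhds (u, p) := by
      apply IsOpen.mem_nhds
      · exact hUopen.preimage continuous_snd
      · constructor <;> simpa using T.one_mem
    have heq : (fun sq : I × (G × G) => φ (commutatorMap G sq.2) sq.1) =ᶠ[nhds (u, p)]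
        (fun sq : I × (G × G) => φ (commutatorMap G p) sq.1) := by
      filter_upwards [hmem] with sq hsq
      rw [hconst p sq.2 hsq.1 hsq.2]
    have : ContinuousAt (fun sq : I × (G × G) => φ (commutatorMap G p) sq.1) (u, p) :=
      ((hφcont (commutatorMap G p)).comp continuous_fst).continuousAt
    exact this.congr heq.symm
  refine ⟨1, ?_⟩
  refine ⟨ContinuousMap.Homotopy.symm ?_⟩
  exact
    { toFun := fun sp => φ (commutatorMap G sp.2) sp.1
      continuous_toFun := hcont
      map_zero_left := fun p => by simpa using hφ0 (commutatorMap G p)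
      map_one_left := fun p => by simpa using hφ1 (commutatorMap G p) (hcT p) }
end

section
/- Let G be a topological group whose identity component G₀ (the connected component of the identity) is isomorphic as a topological group to a torus (Fin n → Circle) for some natural number n. If the commutator map c : G × G → G, c(x,y) = x⁻¹y⁻¹xy, is null-homotopic, then G₀ is contained in the center of G. -/
open Real unitInterval

/-- A nullhomotopic map from a compact space into the circle lifts through `Circle.exp`. -/
lemma exists_lift_of_nullhomotopic {X : Type*} [TopologicalSpace X] [CompactSpace X]
    (f : C(X, Circle)) (hf : f.Nullhomotopic) :
    ∃ h : C(X, ℝ), ∀ x, f x = Circle.exp (h x) := by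
  obtain ⟨y, ⟨K⟩⟩ := hf
  set P : Set I := {t | ∃ h : C(X, ℝ), ∀ x, K (t, x) = Circle.exp (h x)} with hPdef
  have habs : ∀ z : Circle, ‖(z : ℂ)‖ = 1 := fun z => Circle.norm_coe z
  have hne : ∀ z : Circle, (z : ℂ) ≠ 0 := fun z => by
    intro h0; have := habs z; rw [h0] at this; simp at this
  -- local transfer lemma
  have step : ∀ t₀ : I, ∃ V : Set I, IsOpen V ∧ t₀ ∈ V ∧
      ∀ s ∈ V, ∀ t ∈ V, s ∈ P → t ∈ P := by
    intro t₀
    have hKc : Continuous fun p : I × X => (K p : ℂ) :=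
      continuous_subtype_val.comp K.continuous
    have hKc2 : Continuous fun p : I × X => (K (t₀, p.2) : ℂ) :=
      continuous_subtype_val.comp (K.continuous.comp
        (continuous_const.prodMk continuous_snd))
    have hcont : Continuous fun p : I × X =>
        ‖(K p : ℂ) - (K (t₀, p.2) : ℂ)‖ :=
      continuous_norm.comp (hKc.sub hKc2)
    have hUopen : IsOpen {p : I × X | ‖(K p : ℂ) - (K (t₀, p.2) : ℂ)‖ < 1} :=
      isOpen_lt hcont continuous_const
    have hsub : ({t₀} ×ˢ (Set.univ : Set X)) ⊆
        {p : I × X | ‖(K p : ℂ) - (K (t₀, p.2) : ℂ)‖ < 1} := by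
      rintro ⟨t, x⟩ ⟨ht, -⟩
      simp only [Set.mem_singleton_iff] at ht
      subst ht
      simp
    obtain ⟨V, W, hVopen, -, hV, hW, hVW⟩ :=
      generalized_tube_lemma isCompact_singleton isCompact_univ hUopen hsub
    refine ⟨V, hVopen, hV rfl, ?_⟩
    intro s hs t ht ⟨h, hh⟩
    -- all pairs in V are within distance 2 pointwise
    have key : ∀ x, ‖(K (t, x) : ℂ) - (K (s, x) : ℂ)‖ < 2 := by
      intro x
      have h1 : ‖(K (t, x) : ℂ) - (K (t₀, x) : ℂ)‖ < 1 :=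
        hVW ⟨ht, hW (Set.mem_univ x)⟩
      have h2 : ‖(K (s, x) : ℂ) - (K (t₀, x) : ℂ)‖ < 1 :=
        hVW ⟨hs, hW (Set.mem_univ x)⟩
      calc ‖(K (t, x) : ℂ) - (K (s, x) : ℂ)‖
          ≤ ‖(K (t, x) : ℂ) - (K (t₀, x) : ℂ)‖
            + ‖(K (t₀, x) : ℂ) - (K (s, x) : ℂ)‖ := by
            exact norm_sub_le_norm_sub_add_norm_sub (K (t, x) : ℂ) (K (t₀, x) : ℂ) (K (s, x) : ℂ)
        _ < 2 := by rw [norm_sub_rev] at h2; linarith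
    -- the pointwise quotient avoids -1, hence lies in the slit plane
    have hquot : ∀ x, ((K (t, x) : ℂ) / (K (s, x) : ℂ)) ∈ Complex.slitPlane := by
      intro x
      set z : ℂ := (K (t, x) : ℂ) / (K (s, x) : ℂ) with hz
      have hzabs : ‖z‖ = 1 := by
        rw [hz, norm_div, habs, habs]; norm_num
      rw [Complex.mem_slitPlane_iff]
      by_contra hcon
      push_neg at hcon
      obtain ⟨hre, him⟩ := hcon
      have hzre : z = (z.re : ℂ) := by
        apply Complex.ext <;> simp [him]
      have : |z.re| = 1 := by
        rw [hzre] at hzabs; rwa [Complex.norm_real, Real.norm_eq_abs] at hzabs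
      have hzrev : z.re = -1 := by
        cases abs_cases z.re with
        | inl hc => linarith [hc.1, hc.2]
        | inr hc => linarith [hc.1]
      have hzeq : z = -1 := by rw [hzre, hzrev]; norm_num
      have : (K (t, x) : ℂ) = -(K (s, x) : ℂ) := by
        have := hz.symm
        rw [hzeq] at this
        field_simp at this
        linear_combination this
      have h2' := key x
      rw [this] at h2'
      have : ‖-(K (s, x) : ℂ) - (K (s, x) : ℂ)‖ = 2 := by
        have : -(K (s, x) : ℂ) - (K (s, x) : ℂ) = (-2) * (K (s, x) : ℂ) := by ring
        rw [this, norm_mul, habs]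
        norm_num
      linarith [h2', this.ge, this.le]
    -- build the lift at time t
    have hinner : Continuous fun x : X => (K (t, x) : ℂ) / (K (s, x) : ℂ) := by
      refine Continuous.div₀ ?_ ?_ (fun x => hne _) <;>
        exact continuous_subtype_val.comp (K.continuous.comp
          (continuous_const.prodMk continuous_id))
    have hθcont : Continuous fun x => Complex.arg ((K (t, x) : ℂ) / (K (s, x) : ℂ)) := by
      rw [continuous_iff_continuousAt]
      intro x
      show ContinuousAt (Complex.arg ∘ fun x : X => (K (t, x) : ℂ) / (K (s, x) : ℂ)) x
      exact ContinuousAt.comp (g := Complex.arg)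
        (x := x) (f := fun x : X => (K (t, x) : ℂ) / (K (s, x) : ℂ))
        (Complex.continuousAt_arg (hquot x)) hinner.continuousAt
    refine ⟨ContinuousMap.mk (fun x => h x + Complex.arg ((K (t, x) : ℂ) / (K (s, x) : ℂ)))
      (h.continuous.add hθcont), ?_⟩
    intro x
    apply Subtype.ext
    show (K (t, x) : ℂ) = (Circle.exp (h x + Complex.arg ((K (t, x) : ℂ) / (K (s, x) : ℂ))) : ℂ)
    set w : ℂ := (K (t, x) : ℂ) / (K (s, x) : ℂ) with hw
    have hwabs : ‖w‖ = 1 := by rw [hw, norm_div, habs, habs]; norm_num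
    have hexpw : Complex.exp (w.arg * Complex.I) = w := by
      have := Complex.norm_mul_exp_arg_mul_I w
      rwa [hwabs, Complex.ofReal_one, one_mul] at this
    have : (Circle.exp (h x + w.arg) : ℂ)
        = Complex.exp ((h x : ℂ) * Complex.I) * w := by
      rw [Circle.coe_exp]
      push_cast
      rw [add_mul, Complex.exp_add, hexpw]
    rw [this, ← Circle.coe_exp, ← hh x, hw,
      mul_comm ((K (s, x) : Circle) : ℂ), div_mul_cancel₀ _ (hne _)]
  -- P is clopen and nonempty
  have hPopen : IsOpen P := by
    rw [isOpen_iff_forall_mem_open]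
    intro t₀ ht₀
    obtain ⟨V, hVopen, hV, hVP⟩ := step t₀
    exact ⟨V, fun t ht => hVP t₀ hV t ht ht₀, hVopen, hV⟩
  have hPclosed : IsClosed P := by
    rw [← isOpen_compl_iff]
    rw [isOpen_iff_forall_mem_open]
    intro t₀ ht₀
    obtain ⟨V, hVopen, hV, hVP⟩ := step t₀
    refine ⟨V, fun t ht hc => ht₀ (hVP t ht t₀ hV hc), hVopen, hV⟩
  have hone : (1 : I) ∈ P := by
    refine ⟨ContinuousMap.const X (Complex.arg (y : ℂ)), fun x => ?_⟩
    rw [K.apply_one]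
    exact (Circle.exp_arg y).symm
  have : P = Set.univ := IsClopen.eq_univ ⟨hPclosed, hPopen⟩ ⟨1, hone⟩
  have hzero : (0 : I) ∈ P := this ▸ Set.mem_univ _
  obtain ⟨h, hh⟩ := hzero
  exact ⟨h, fun x => by rw [← K.apply_zero]; exact hh x⟩

lemma circle_connectedSpace : ConnectedSpace Circle := by
  rw [connectedSpace_iff_univ]
  have : (Set.univ : Set Circle) = Set.range Circle.exp := by
    ext z
    simp only [Set.mem_univ, Set.mem_range, true_iff]
    exact ⟨Complex.arg z, Circle.exp_arg z⟩
  rw [this]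
  exact isConnected_range Circle.exp.continuous

lemma circle_exp_eq_one_iff (t : ℝ) : Circle.exp t = 1 ↔ ∃ k : ℤ, t = k * (2 * π) := by
  constructor
  · intro ht
    have h1 : Complex.exp ((t : ℂ) * Complex.I) = 1 := by
      have := congrArg (fun z : Circle => (z : ℂ)) ht
      simpa [Circle.coe_exp] using this
    obtain ⟨n, hn⟩ := Complex.exp_eq_one_iff.mp h1
    refine ⟨n, ?_⟩
    have h2 : ((t : ℂ)) * Complex.I = ((n : ℝ) * (2 * π) : ℝ) * Complex.I := by
      rw [hn]; push_cast; ring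
    have h3 : (t : ℂ) = ((n : ℝ) * (2 * π) : ℝ) := by
      exact mul_right_cancel₀ Complex.I_ne_zero h2
    exact_mod_cast h3
  · rintro ⟨k, rfl⟩
    apply Subtype.ext
    rw [Circle.coe_exp]
    simp only [Circle.coe_one]
    rw [Complex.exp_eq_one_iff]
    exact ⟨k, by push_cast; ring⟩

/-- A monoid hom of the circle which lifts through `Circle.exp` is trivial. -/
lemma circleHom_trivial_of_lift (φ : Circle →* Circle) (h : C(Circle, ℝ))
    (hh : ∀ z, φ z = Circle.exp (h z)) : ∀ z, φ z = 1 := by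
  haveI : ConnectedSpace Circle := circle_connectedSpace
  -- the defect function takes values in 2πℤ
  have hψcont : Continuous fun z : Circle => h (z * z) - 2 * h z := by
    have h1 : Continuous fun z : Circle => h (z * z) :=
      h.continuous.comp (continuous_id.mul continuous_id)
    fun_prop
  have hψ : ∀ z : Circle, ∃ k : ℤ, h (z * z) - 2 * h z = k * (2 * π) := by
    intro z
    rw [← circle_exp_eq_one_iff]
    have : Circle.exp (h (z * z) - 2 * h z) = φ (z * z) / (φ z * φ z) := by
      rw [two_mul, Circle.exp_sub, Circle.exp_add, ← hh, ← hh]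
    rw [this, map_mul]
    exact div_self' _
  -- the defect function is constant
  have hconst : ∀ u v : Circle, h (u * u) - 2 * h u = h (v * v) - 2 * h v := by
    have keylt : ∀ u v : Circle,
        (h (u * u) - 2 * h u) < (h (v * v) - 2 * h v) → False := by
      intro u v hlt
      obtain ⟨a, ha⟩ := hψ u
      obtain ⟨b, hb⟩ := hψ v
      have hab : (a : ℝ) < b := by
        rw [ha, hb] at hlt
        have h2π : (0 : ℝ) < 2 * π := by positivity
        exact_mod_cast lt_of_mul_lt_mul_right hlt (le_of_lt h2π)
      have hab' : a + 1 ≤ b := by exact_mod_cast Int.add_one_le_iff.mpr (by exact_mod_cast hab)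
      have hmid : (a : ℝ) * (2 * π) + π ∈
          Set.Icc (h (u * u) - 2 * h u) (h (v * v) - 2 * h v) := by
        constructor
        · rw [ha]; linarith [pi_pos]
        · rw [hb]
          have : ((a : ℝ) + 1) * (2 * π) ≤ (b : ℝ) * (2 * π) := by
            have : ((a : ℝ) + 1) ≤ (b : ℝ) := by exact_mod_cast hab'
            nlinarith [pi_pos]
          nlinarith [pi_pos]
      obtain ⟨w, hw⟩ := intermediate_value_univ u v hψcont hmid
      beta_reduce at hw
      obtain ⟨c, hc⟩ := hψ w
      rw [hc] at hw
      have hπ : π ≠ 0 := pi_ne_zero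
      have : (2 * (c : ℝ) - 2 * (a : ℝ)) * π = 1 * π := by ring_nf; nlinarith [hw]
      have h1 : (2 * (c : ℝ) - 2 * (a : ℝ)) = 1 := by
        exact mul_right_cancel₀ hπ this
      have : (2 * c - 2 * a : ℤ) = 1 := by exact_mod_cast h1
      omega
    intro u v
    rcases lt_trichotomy (h (u * u) - 2 * h u) (h (v * v) - 2 * h v) with hlt | heq | hgt
    · exact absurd hlt (fun hl => keylt u v hl)
    · exact heq
    · exact absurd hgt (fun hg => keylt v u hg)
  -- normalize: h' z = h z - h 1 satisfies h'(z²) = 2 h'(z)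
  set c : ℝ := h 1 with hc
  have hdouble : ∀ z : Circle, h (z * z) - c = 2 * (h z - c) := by
    intro z
    have h2 := hconst z 1
    rw [one_mul] at h2
    linarith [h2]
  have hiter : ∀ (m : ℕ) (z : Circle), h (z ^ (2 ^ m)) - c = 2 ^ m * (h z - c) := by
    intro m
    induction m with
    | zero => intro z; simp
    | succ m ih =>
      intro z
      have hpow : z ^ (2 ^ (m + 1)) = z ^ (2 ^ m) * z ^ (2 ^ m) := by
        rw [← pow_add]; ring_nf
      rw [hpow, hdouble, ih]
      ring
  -- boundedness forces h' = 0
  obtain ⟨M, hM⟩ : ∃ M : ℝ, ∀ z : Circle, |h z - c| ≤ M := by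
    obtain ⟨M, hM⟩ := (isCompact_univ (X := Circle)).exists_bound_of_continuousOn
      ((h.continuous.sub continuous_const).continuousOn (s := Set.univ))
    exact ⟨M, fun z => by simpa using hM z (Set.mem_univ z)⟩
  have hzero : ∀ z : Circle, h z = c := by
    intro z
    by_contra hne
    have habs : 0 < |h z - c| := abs_pos.mpr (sub_ne_zero.mpr hne)
    obtain ⟨m, hm⟩ := pow_unbounded_of_one_lt (M / |h z - c|) (one_lt_two (α := ℝ))
    have h1 : |h (z ^ (2 ^ m)) - c| ≤ M := hM _
    rw [hiter m z, abs_mul, abs_pow, abs_two] at h1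
    have : M / |h z - c| < 2 ^ m := hm
    have : M < 2 ^ m * |h z - c| := by
      rwa [div_lt_iff₀ habs] at this
    linarith
  intro z
  rw [hh z, hzero z, hc, ← hh 1, map_one]

lemma circleHom_trivial_of_nullhomotopic (φ : Circle →* Circle) (cφ : C(Circle, Circle))
    (hcφ : ∀ w, cφ w = φ w) (hnull : cφ.Nullhomotopic) : ∀ w, φ w = 1 := by
  obtain ⟨h, hh⟩ := exists_lift_of_nullhomotopic cφ hnull
  exact circleHom_trivial_of_lift φ h (fun z => by rw [← hcφ z]; exact hh z)

lemma continuous_mulSingleCircle {n : ℕ} (i : Fin n) :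
    Continuous (Pi.mulSingle (M := fun _ : Fin n => Circle) i) := by
  apply continuous_pi
  intro j
  rcases eq_or_ne j i with rfl | hne
  · simpa [Pi.mulSingle_eq_same] using continuous_id'
  · simp only [Pi.mulSingle_eq_of_ne hne]
    exact continuous_const

/-- If the identity component of a topological group `G` is a torus (as a topological
group) and the commutator map of `G` is null-homotopic, then the identity component is
central in `G`. -/
theorem connectedComponentOfOne_le_center_of_nullhomotopic {G : Type*} [Group G]
    [TopologicalSpace G] [IsTopologicalGroup G] (n : ℕ)
    (e : (Subgroup.connectedComponentOfOne G) ≃* (Fin n → Circle))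
    (he : Continuous e) (he' : Continuous e.symm)
    (hnull : (commutatorMap G).Nullhomotopic) :
    Subgroup.connectedComponentOfOne G ≤ Subgroup.center G := by
  classical
  haveI : ConnectedSpace Circle := circle_connectedSpace
  intro x hx
  rw [Subgroup.mem_center_iff]
  intro g
  -- conjugation by g preserves the identity component
  have hconj : ∀ u : G, u ∈ connectedComponent (1 : G) →
      g⁻¹ * u * g ∈ connectedComponent (1 : G) := by
    intro u hu
    have hcont : Continuous fun w : G => g⁻¹ * w * g := by continuity
    have himg := hcont.image_connectedComponent_subset (1 : G)
    have : g⁻¹ * u * g ∈ (fun w : G => g⁻¹ * w * g) '' connectedComponent (1 : G) :=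
      ⟨u, hu, rfl⟩
    simpa using himg this
  -- the conjugation monoid hom on G₀
  let A : Subgroup.connectedComponentOfOne G →* Subgroup.connectedComponentOfOne G :=
    { toFun := fun u => ⟨g⁻¹ * (u : G) * g, hconj u u.2⟩
      map_one' := by ext; simp
      map_mul' := by intro u v; ext; simp [mul_assoc] }
  have hAcont : Continuous A :=
    Continuous.subtype_mk ((continuous_const.mul continuous_subtype_val).mul continuous_const) _
  -- B and M on the torus
  let B : (Fin n → Circle) →* (Fin n → Circle) := (e.toMonoidHom.comp A).comp e.symm.toMonoidHom
  let M : (Fin n → Circle) →* (Fin n → Circle) := B⁻¹ * MonoidHom.id _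
  -- the continuous version m of M, obtained from the commutator map
  have hAs : Continuous fun z : Fin n → Circle => A (e.symm z) := hAcont.comp he'
  have hmcont : Continuous fun z : Fin n → Circle => e ((A (e.symm z))⁻¹ * e.symm z) :=
    he.comp (hAs.inv.mul he')
  let m : C(Fin n → Circle, Fin n → Circle) :=
    ⟨fun z => e ((A (e.symm z))⁻¹ * e.symm z), hmcont⟩
  have hMapp : ∀ z : Fin n → Circle, m z = M z := by
    intro z
    show e ((A (e.symm z))⁻¹ * e.symm z) = (B z)⁻¹ * z
    rw [map_mul, map_inv]
    simp [B]
  -- m is nullhomotopic via the commutator homotopy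
  have hι : Continuous fun z : Fin n → Circle => ((e.symm z : G)) :=
    continuous_subtype_val.comp he'
  let ι : C(Fin n → Circle, G × G) := ⟨fun z => (g, (e.symm z : G)),
    continuous_const.prodMk hι⟩
  have hqnull : ((commutatorMap G).comp ι).Nullhomotopic := hnull.comp_left ι
  obtain ⟨y, ⟨K⟩⟩ := hqnull
  have hKmem : ∀ p : unitInterval × (Fin n → Circle), K p ∈ connectedComponent (1 : G) := by
    have h1 : (1 : G) ∈ Set.range K := by
      refine ⟨(0, 1), ?_⟩
      rw [K.apply_zero]
      show g⁻¹ * ((e.symm 1 : Subgroup.connectedComponentOfOne G) : G)⁻¹ * g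
          * ((e.symm 1 : Subgroup.connectedComponentOfOne G) : G) = 1
      rw [map_one e.symm]
      simp
    have hconn := (isConnected_range K.continuous).subset_connectedComponent h1
    exact fun p => hconn ⟨p, rfl⟩
  have hyG₀ : y ∈ connectedComponent (1 : G) := by
    have := hKmem (1, 1)
    rwa [K.apply_one] at this
  have hmnull : m.Nullhomotopic := by
    refine ⟨e ⟨y, hyG₀⟩, ⟨{
      toFun := fun p => e ⟨K p, hKmem p⟩
      continuous_toFun := by
        have hKsub : Continuous fun p : unitInterval × (Fin n → Circle) =>
            (⟨K p, hKmem p⟩ : Subgroup.connectedComponentOfOne G) :=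
          K.continuous.subtype_mk _
        exact he.comp hKsub
      map_zero_left := ?_
      map_one_left := ?_ }⟩⟩
    · intro z
      show e ⟨K (0, z), hKmem _⟩ = e ((A (e.symm z))⁻¹ * e.symm z)
      apply congrArg e
      apply Subtype.ext
      show K (0, z) = _
      rw [K.apply_zero]
      show g⁻¹ * ((e.symm z : Subgroup.connectedComponentOfOne G) : G)⁻¹ * g
          * ((e.symm z : Subgroup.connectedComponentOfOne G) : G) = _
      push_cast
      show _ = (g⁻¹ * ((e.symm z : Subgroup.connectedComponentOfOne G) : G) * g)⁻¹
          * ((e.symm z : Subgroup.connectedComponentOfOne G) : G)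
      group
    · intro z
      show e ⟨K (1, z), hKmem _⟩ = e ⟨y, hyG₀⟩
      apply congrArg e
      apply Subtype.ext
      show K (1, z) = y
      exact K.apply_one z
  -- coordinate homomorphisms are trivial
  have hcoord : ∀ (i : Fin n) (w : Circle), M (Pi.mulSingle i w) = 1 := by
    intro i w
    funext j
    let singleC : C(Circle, Fin n → Circle) :=
      ContinuousMap.mk (Pi.mulSingle (M := fun _ : Fin n => Circle) i)
        (continuous_mulSingleCircle i)
    let evalC : C(Fin n → Circle, Circle) := ⟨fun z => z j, continuous_apply j⟩
    let φij : Circle →* Circle :=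
      (Pi.evalMonoidHom (fun _ : Fin n => Circle) j).comp
        (M.comp (MonoidHom.mulSingle (fun _ : Fin n => Circle) i))
    have hnullφ : (evalC.comp (m.comp singleC)).Nullhomotopic :=
      (hmnull.comp_left singleC).comp_right evalC
    have htriv := circleHom_trivial_of_nullhomotopic φij (evalC.comp (m.comp singleC))
      (fun w' => by
        show m (Pi.mulSingle i w') j = M (Pi.mulSingle i w') j
        rw [hMapp]) hnullφ
    have := htriv w
    simpa [φij] using this
  -- hence M = 1
  have hM1 : ∀ z : Fin n → Circle, M z = 1 := by
    have := MonoidHom.functions_ext (M := fun _ : Fin n => Circle)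
      (Fin n → Circle) M 1 (fun i x => by rw [hcoord i x]; simp)
    intro z; rw [this]; rfl
  -- conclude
  have hBz : B (e ⟨x, hx⟩) = e ⟨x, hx⟩ := by
    have := hM1 (e ⟨x, hx⟩)
    have h2 : (B (e ⟨x, hx⟩))⁻¹ * (e ⟨x, hx⟩) = 1 := this
    group at h2
    rw [← inv_inv (B (e ⟨x, hx⟩))]
    rw [inv_eq_iff_mul_eq_one]
    rw [← h2]
    group
  have hA : A ⟨x, hx⟩ = ⟨x, hx⟩ := by
    apply e.injective
    have : B (e ⟨x, hx⟩) = e (A ⟨x, hx⟩) := by simp [B]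
    rw [← this, hBz]
  have hxg : g⁻¹ * x * g = x := congrArg Subtype.val hA
  have h2 := congrArg (fun w => g * w) hxg
  simp only [← mul_assoc, mul_inv_cancel_left] at h2
  simp only [mul_assoc] at h2
  rw [← h2]
  simp [mul_assoc]
end

section
/- Let Q₈ denote the quaternion group of order eight and let G = (Circle × Q₈) ⧸ N, where N is the central subgroup of order two of Circle × Q₈ generated by the element (−1, −1) (in the presentation QuaternionGroup 2, the element −1 of Q₈ is a², the unique central element of order 2). Then the commutator subgroup ⁅G, G⁆ of G has exactly two elements, namely the images of (1, 1) and (−1, 1). -/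
/-- The element `-1` of the circle group. -/
noncomputable def Circle.negOne : Circle :=
  ⟨-1, by
    show (-1 : ℂ) ∈ Metric.sphere (0 : ℂ) 1
    simp⟩

/-- The central subgroup of order two of `Circle × Q₈` generated by `(-1, -1)`, where
`-1 = a²` in `Q₈ = QuaternionGroup 2`. -/
noncomputable def centralTwo : Subgroup (Circle × QuaternionGroup 2) :=
  Subgroup.zpowers (Circle.negOne, QuaternionGroup.a 2)

instance : centralTwo.Normal := by
  constructor
  intro x hx g
  obtain ⟨k, rfl⟩ := Subgroup.mem_zpowers_iff.mp hx
  have ha : ∀ q : QuaternionGroup 2, q * QuaternionGroup.a 2 = QuaternionGroup.a 2 * q := by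
    decide
  have hz : Commute g (Circle.negOne, QuaternionGroup.a 2) :=
    Prod.ext (mul_comm _ _) (ha g.2)
  have h : Commute g ((Circle.negOne, QuaternionGroup.a 2) ^ k) := hz.zpow_right k
  rw [h.eq, mul_assoc, mul_inv_cancel, mul_one]
  exact Subgroup.mem_zpowers_iff.mpr ⟨k, rfl⟩

/-- The quotient group `G = (Circle × Q₈) ⧸ ⟨(-1, -1)⟩`. -/
noncomputable abbrev QG : Type :=
  (Circle × QuaternionGroup 2) ⧸ centralTwo

lemma Circle.negOne_ne_one : Circle.negOne ≠ 1 := by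
  intro h
  have := congrArg (fun x : Circle => (x : ℂ)) h
  simp [Circle.negOne] at this
  norm_num at this

lemma Circle.negOne_sq : Circle.negOne * Circle.negOne = 1 := by
  ext
  rw [Circle.coe_mul]
  simp [Circle.negOne]

lemma Circle.negOne_inv : Circle.negOne⁻¹ = Circle.negOne := by
  rw [inv_eq_iff_mul_eq_one, Circle.negOne_sq]

lemma mk_negOne_eq : (QuotientGroup.mk (Circle.negOne, (1 : QuaternionGroup 2)) : QG)
    = QuotientGroup.mk ((1 : Circle), QuaternionGroup.a 2) := by
  rw [QuotientGroup.eq]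
  refine ⟨1, ?_⟩
  simp only [zpow_one]
  ext
  · simp [Circle.negOne_inv]
  · simp

open scoped commutatorElement

/-- The commutator subgroup of `G = (Circle × Q₈) ⧸ ⟨(-1, -1)⟩` consists of exactly two
elements: the images of `(1, 1)` and `(-1, 1)`. -/
theorem commutator_quotient_circle_quaternion :
    (commutator QG : Set QG) =
      {QuotientGroup.mk ((1 : Circle), (1 : QuaternionGroup 2)),
        QuotientGroup.mk (Circle.negOne, (1 : QuaternionGroup 2))} ∧
    (QuotientGroup.mk (Circle.negOne, (1 : QuaternionGroup 2)) : QG) ≠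
      QuotientGroup.mk ((1 : Circle), (1 : QuaternionGroup 2)) := by
  set g : QG := QuotientGroup.mk (Circle.negOne, (1 : QuaternionGroup 2)) with hg
  have hone : (QuotientGroup.mk ((1 : Circle), (1 : QuaternionGroup 2)) : QG) = 1 := rfl
  have hgsq : g * g = 1 := by
    rw [hg, mk_negOne_eq, ← QuotientGroup.mk_mul,
      show ((1 : Circle), QuaternionGroup.a 2) * ((1 : Circle), QuaternionGroup.a 2)
        = ((1:Circle), (1 : QuaternionGroup 2)) by
      ext
      · simp
      · decide]
    rfl
  have hne : g ≠ 1 := by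
    rw [hg]
    intro h
    rw [show (1 : QG) = QuotientGroup.mk ((1:Circle), (1:QuaternionGroup 2)) from rfl,
      QuotientGroup.eq] at h
    obtain ⟨k, hk⟩ := h
    dsimp only at hk
    have h2 : (((Circle.negOne, QuaternionGroup.a 2) : Circle × QuaternionGroup 2) ^ k).2 = (1 : QuaternionGroup 2) := by
      rw [hk]; rfl
    have h1 : (((Circle.negOne, QuaternionGroup.a 2) : Circle × QuaternionGroup 2) ^ k).1 = Circle.negOne := by
      rw [hk]
      show Circle.negOne⁻¹ * 1 = Circle.negOne
      simp [Circle.negOne_inv]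
    simp only [Prod.pow_snd, Prod.pow_fst] at h1 h2
    have hord : orderOf (QuaternionGroup.a 2 : QuaternionGroup 2) = 2 :=
      orderOf_eq_prime (by decide) (by decide)
    have hdvd : (2 : ℤ) ∣ k := by
      have := orderOf_dvd_iff_zpow_eq_one.mpr h2
      rwa [hord] at this
    obtain ⟨m, rfl⟩ := hdvd
    rw [zpow_mul] at h1
    have : (Circle.negOne ^ (2:ℤ)) = 1 := by
      rw [show (2:ℤ) = 1+1 by ring, zpow_add, zpow_one, Circle.negOne_sq]
    rw [this, one_zpow] at h1
    exact Circle.negOne_ne_one h1.symm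
  refine ⟨?_, hne⟩
  have hgmem : g ∈ commutator QG := by
    rw [hg, mk_negOne_eq]
    have hcomm : (QuaternionGroup.a 2 : QuaternionGroup 2)
        = ⁅(QuaternionGroup.a 1 : QuaternionGroup 2), QuaternionGroup.xa 0⁆ := by decide
    have : (QuotientGroup.mk ((1 : Circle), QuaternionGroup.a 2) : QG)
        = ⁅(QuotientGroup.mk ((1:Circle), QuaternionGroup.a 1) : QG),
            QuotientGroup.mk ((1:Circle), QuaternionGroup.xa 0)⁆ := by
      show _ = QuotientGroup.mk _
      congr 1
      ext
      · simp [commutatorElement_def]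
      · simpa [commutatorElement_def] using hcomm
    rw [this, commutator_def]
    exact Subgroup.commutator_mem_commutator (Subgroup.mem_top _) (Subgroup.mem_top _)
  have hle : commutator QG ≤ Subgroup.zpowers g := by
    rw [commutator_def, Subgroup.commutator_le]
    intro x _ y _
    induction x using QuotientGroup.induction_on with | _ x =>
    induction y using QuotientGroup.induction_on with | _ y =>
    have key : ∀ p q : QuaternionGroup 2, ⁅p, q⁆ = 1 ∨ ⁅p, q⁆ = QuaternionGroup.a 2 := by
      decide
    have hxy : ⁅(QuotientGroup.mk x : QG), QuotientGroup.mk y⁆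
        = (QuotientGroup.mk ((1 : Circle), ⁅x.2, y.2⁆) : QG) := by
      show QuotientGroup.mk _ = QuotientGroup.mk _
      congr 1
      ext
      · simp [commutatorElement_def, mul_comm, mul_assoc, mul_left_comm]
      · rfl
    rw [hxy]
    rcases key x.2 y.2 with h | h
    · rw [h]; exact one_mem _
    · rw [h, ← mk_negOne_eq]; exact Subgroup.mem_zpowers g
  ext x
  simp only [Set.mem_insert_iff, Set.mem_singleton_iff, hone]
  constructor
  · intro hx
    obtain ⟨k, rfl⟩ := Subgroup.mem_zpowers_iff.mp (hle hx)
    rcases Int.even_or_odd k with ⟨m, rfl⟩ | ⟨m, rfl⟩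
    · left
      rw [show m + m = 2 * m by ring, zpow_mul]
      rw [show g ^ (2:ℤ) = 1 by rw [show (2:ℤ)=1+1 by ring, zpow_add, zpow_one, hgsq]]
      simp
    · right
      rw [zpow_add, zpow_one, zpow_mul,
        show g ^ (2:ℤ) = 1 by rw [show (2:ℤ)=1+1 by ring, zpow_add, zpow_one, hgsq]]
      simp
  · rintro (rfl | rfl)
    · exact one_mem _
    · exact hgmem
end

section
/- The special linear group SL(2, ℝ), with its topology as a subspace of the 2×2 real matrices, is homotopy abelian but not commutative: its commutator map c : SL(2,ℝ) × SL(2,ℝ) → SL(2,ℝ), c(x,y) = x⁻¹y⁻¹xy, is null-homotopic, yet there exist x, y ∈ SL(2,ℝ) with x * y ≠ y * x. -/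
/-- `SL(2, ℝ)` carries the subspace topology from the `2 × 2` real matrices. -/
noncomputable instance : TopologicalSpace (Matrix.SpecialLinearGroup (Fin 2) ℝ) :=
  show TopologicalSpace {A : Matrix (Fin 2) (Fin 2) ℝ // A.det = 1} from inferInstance

instance : ContinuousMul (Matrix.SpecialLinearGroup (Fin 2) ℝ) := by
  constructor
  apply continuous_induced_rng.2
  show Continuous fun p :
      Matrix.SpecialLinearGroup (Fin 2) ℝ × Matrix.SpecialLinearGroup (Fin 2) ℝ =>
    ((p.1 : Matrix (Fin 2) (Fin 2) ℝ) * (p.2 : Matrix (Fin 2) (Fin 2) ℝ))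
  exact (continuous_subtype_val.comp continuous_fst).matrix_mul
    (continuous_subtype_val.comp continuous_snd)

instance : ContinuousInv (Matrix.SpecialLinearGroup (Fin 2) ℝ) := by
  constructor
  apply continuous_induced_rng.2
  show Continuous fun a : Matrix.SpecialLinearGroup (Fin 2) ℝ =>
    Matrix.adjugate (a : Matrix (Fin 2) (Fin 2) ℝ)
  exact continuous_subtype_val.matrix_adjugate

instance : IsTopologicalGroup (Matrix.SpecialLinearGroup (Fin 2) ℝ) := {}

open Matrix Real in
/-- Gram–Schmidt style deformation retraction of `GL⁺(2,ℝ) ⊇ SL(2,ℝ)` onto `SO(2)`,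
at time `t`, applied to the matrix `!![a, b; c, d]`, renormalized to determinant one. -/
noncomputable def ret (t a b c d : ℝ) : Matrix (Fin 2) (Fin 2) ℝ :=
  retAux a c ((1-t)*Real.sqrt (a^2+c^2) + t)
    ((1-t)*(a*b+c*d)/Real.sqrt (a^2+c^2))
    ((1-t)/Real.sqrt (a^2+c^2) + t)
    (Real.sqrt (a^2+c^2))
where
  retAux (a c u v w n : ℝ) : Matrix (Fin 2) (Fin 2) ℝ :=
    let s := Real.sqrt (u*w)
    !![(a/n*u)/s, (a/n*v - c/n*w)/s; (c/n*u)/s, (c/n*v + a/n*w)/s]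

lemma retAux_det {a c u v w n : ℝ} (hn2 : n^2 = a^2+c^2) (hn : 0 < n)
    (hu : 0 < u) (hw : 0 < w) : (ret.retAux a c u v w n).det = 1 := by
  have huw : 0 < u*w := mul_pos hu hw
  have hs2 : (Real.sqrt (u*w))^2 = u*w := Real.sq_sqrt huw.le
  have hs : 0 < Real.sqrt (u*w) := Real.sqrt_pos.2 huw
  set s := Real.sqrt (u*w) with hsdef
  clear_value s
  rw [ret.retAux, Matrix.det_fin_two_of]
  field_simp
  linear_combination (-(u*w))*hn2 - n^2*(Real.sqrt w)^2*(Real.sq_sqrt hu.le)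
    - n^2*u*(Real.sq_sqrt hw.le)
    + n^2*(Real.sqrt w)^2*(Real.sq_sqrt hu.le) + n^2*u*(Real.sq_sqrt hw.le) - n^2*(Real.sq_sqrt huw.le)

lemma colpos {a b c d : ℝ} (h : a*d - b*c = 1) : 0 < a^2 + c^2 := by
  rcases eq_or_ne a 0 with h0 | h0
  · rcases eq_or_ne c 0 with h1 | h1
    · rw [h0, h1] at h; norm_num at h
    · positivity
  · positivity

lemma ret_pos {a b c d t : ℝ} (h : a*d - b*c = 1) (ht0 : 0 ≤ t) (ht1 : t ≤ 1) :
    0 < Real.sqrt (a^2+c^2) ∧ 0 < (1-t)*Real.sqrt (a^2+c^2) + t ∧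
      0 < (1-t)/Real.sqrt (a^2+c^2) + t := by
  have hp := colpos h
  have hn : 0 < Real.sqrt (a^2+c^2) := Real.sqrt_pos.2 hp
  refine ⟨hn, ?_, ?_⟩
  · rcases eq_or_lt_of_le ht0 with h' | h' <;> nlinarith
  · rcases eq_or_lt_of_le ht0 with h' | h'
    · have : 0 < (1-t)/Real.sqrt (a^2+c^2) := by
        apply div_pos (by nlinarith) hn
      nlinarith
    · have : 0 ≤ (1-t)/Real.sqrt (a^2+c^2) := div_nonneg (by linarith) hn.le
      linarith

lemma ret_det {a b c d t : ℝ} (h : a*d - b*c = 1) (ht0 : 0 ≤ t) (ht1 : t ≤ 1) :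
    (ret t a b c d).det = 1 := by
  obtain ⟨hn, hu, hw⟩ := ret_pos h ht0 ht1
  exact retAux_det (Real.sq_sqrt (colpos h).le) hn hu hw

lemma ret_zero {a b c d : ℝ} (h : a*d - b*c = 1) :
    ret 0 a b c d = !![a, b; c, d] := by
  have hp := colpos h
  have hn : 0 < Real.sqrt (a^2+c^2) := Real.sqrt_pos.2 hp
  have hn2 : (Real.sqrt (a^2+c^2))^2 = a^2+c^2 := Real.sq_sqrt hp.le
  set n := Real.sqrt (a^2+c^2) with hndef
  have hs : Real.sqrt (((1-(0:ℝ))*n + 0) * ((1-(0:ℝ))/n + 0)) = 1 := by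
    rw [show ((1-(0:ℝ))*n + 0) * ((1-(0:ℝ))/n + 0) = n * (1/n) by ring,
      mul_one_div_cancel hn.ne', Real.sqrt_one]
  rw [ret, ret.retAux]
  simp only [← hndef, hs]
  ext i j
  fin_cases i <;> fin_cases j <;>
    simp only [Matrix.cons_val', Matrix.cons_val_zero, Matrix.cons_val_one, Matrix.head_cons,
      Matrix.empty_val', Matrix.cons_val_fin_one, Matrix.head_fin_const, Matrix.of_apply,
      Fin.zero_eta, Fin.mk_one] <;>
    field_simp <;> ring_nf
  · linear_combination c*h - b*hn2
  · linear_combination (-a)*h - d*hn2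

lemma ret_one (a b c d : ℝ) :
    ret 1 a b c d = !![a/Real.sqrt (a^2+c^2), -(c/Real.sqrt (a^2+c^2));
      c/Real.sqrt (a^2+c^2), a/Real.sqrt (a^2+c^2)] := by
  rw [ret, ret.retAux]
  norm_num

lemma rot_comm (p q p' q' : ℝ) :
    !![p, -q; q, p] * !![p', -q'; q', p'] = !![p', -q'; q', p'] * !![p, -q; q, p] := by
  ext i j
  fin_cases i <;> fin_cases j <;>
    simp [Matrix.mul_apply, Fin.sum_univ_two] <;> ring

lemma ret_continuous {X : Type*} [TopologicalSpace X] {ft fa fb fc fd : X → ℝ}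
    (hct : Continuous ft) (hca : Continuous fa) (hcb : Continuous fb)
    (hcc : Continuous fc) (hcd : Continuous fd)
    (hdet : ∀ x, fa x * fd x - fb x * fc x = 1)
    (ht0 : ∀ x, 0 ≤ ft x) (ht1 : ∀ x, ft x ≤ 1) :
    Continuous fun x => ret (ft x) (fa x) (fb x) (fc x) (fd x) := by
  have hcn : Continuous fun x => Real.sqrt (fa x^2 + fc x^2) :=
    Real.continuous_sqrt.comp ((hca.pow 2).add (hcc.pow 2))
  have hn0 : ∀ x, Real.sqrt (fa x^2 + fc x^2) ≠ 0 := fun x =>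
    (Real.sqrt_pos.2 (colpos (hdet x))).ne'
  have hcu : Continuous fun x => (1 - ft x)*Real.sqrt (fa x^2 + fc x^2) + ft x :=
    (((continuous_const.sub hct).mul hcn).add hct)
  have hu0 : ∀ x, (1 - ft x)*Real.sqrt (fa x^2 + fc x^2) + ft x ≠ 0 := fun x =>
    (ret_pos (hdet x) (ht0 x) (ht1 x)).2.1.ne'
  have hcw : Continuous fun x => (1 - ft x)/Real.sqrt (fa x^2 + fc x^2) + ft x :=
    (((continuous_const.sub hct).div hcn hn0).add hct)
  have hw0 : ∀ x, (1 - ft x)/Real.sqrt (fa x^2 + fc x^2) + ft x ≠ 0 := fun x =>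
    (ret_pos (hdet x) (ht0 x) (ht1 x)).2.2.ne'
  have hcv : Continuous fun x =>
      (1 - ft x)*(fa x * fb x + fc x * fd x)/Real.sqrt (fa x^2 + fc x^2) :=
    ((continuous_const.sub hct).mul ((hca.mul hcb).add (hcc.mul hcd))).div hcn hn0
  have hcs : Continuous fun x => Real.sqrt
      (((1 - ft x)*Real.sqrt (fa x^2 + fc x^2) + ft x) *
       ((1 - ft x)/Real.sqrt (fa x^2 + fc x^2) + ft x)) :=
    Real.continuous_sqrt.comp (hcu.mul hcw)
  have hs0 : ∀ x, Real.sqrt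
      (((1 - ft x)*Real.sqrt (fa x^2 + fc x^2) + ft x) *
       ((1 - ft x)/Real.sqrt (fa x^2 + fc x^2) + ft x)) ≠ 0 := fun x => by
    have h := ret_pos (hdet x) (ht0 x) (ht1 x)
    exact (Real.sqrt_pos.2 (mul_pos h.2.1 h.2.2)).ne'
  simp only [ret, ret.retAux]
  apply continuous_matrix
  intro i j
  fin_cases i <;> fin_cases j <;>
    simp only [Matrix.cons_val', Matrix.cons_val_zero, Matrix.cons_val_one, Matrix.head_cons,
      Matrix.empty_val', Matrix.cons_val_fin_one, Matrix.head_fin_const, Matrix.of_apply]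
  · exact ((hca.div hcn hn0).mul hcu).div hcs hs0
  · exact (((hca.div hcn hn0).mul hcv).sub ((hcc.div hcn hn0).mul hcw)).div hcs hs0
  · exact ((hcc.div hcn hn0).mul hcu).div hcs hs0
  · exact (((hcc.div hcn hn0).mul hcv).add ((hca.div hcn hn0).mul hcw)).div hcs hs0

namespace SL2Retract

abbrev G := Matrix.SpecialLinearGroup (Fin 2) ℝ

lemma sl2_det {x : G} :
    (x : Matrix (Fin 2) (Fin 2) ℝ) 0 0 * (x : Matrix (Fin 2) (Fin 2) ℝ) 1 1 -
      (x : Matrix (Fin 2) (Fin 2) ℝ) 0 1 * (x : Matrix (Fin 2) (Fin 2) ℝ) 1 0 = 1 := by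
  have h := x.2
  rwa [Matrix.det_fin_two] at h

/-- The deformation retraction onto `SO(2)`, as a map `[0,1] × SL(2,ℝ) → SL(2,ℝ)`. -/
noncomputable def rmap (p : unitInterval × G) : G :=
  ⟨ret (p.1 : ℝ) ((p.2 : Matrix (Fin 2) (Fin 2) ℝ) 0 0) ((p.2 : Matrix (Fin 2) (Fin 2) ℝ) 0 1)
      ((p.2 : Matrix (Fin 2) (Fin 2) ℝ) 1 0) ((p.2 : Matrix (Fin 2) (Fin 2) ℝ) 1 1),
    ret_det sl2_det p.1.2.1 p.1.2.2⟩

lemma rmap_continuous : Continuous rmap := by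
  apply Continuous.subtype_mk
  have hcM : Continuous fun p : unitInterval × G => (p.2 : Matrix (Fin 2) (Fin 2) ℝ) :=
    continuous_subtype_val.comp continuous_snd
  exact ret_continuous (continuous_subtype_val.comp continuous_fst)
    (hcM.matrix_elem 0 0) (hcM.matrix_elem 0 1) (hcM.matrix_elem 1 0) (hcM.matrix_elem 1 1)
    (fun p => sl2_det) (fun p => p.1.2.1) (fun p => p.1.2.2)

lemma rmap_zero (x : G) : rmap (0, x) = x := by
  apply Subtype.ext
  show ret ((0 : unitInterval) : ℝ) _ _ _ _ = _
  rw [show ((0 : unitInterval) : ℝ) = 0 from rfl, ret_zero sl2_det]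
  exact (Matrix.eta_fin_two _).symm

lemma rmap_comm (x y : G) : rmap (1, x) * rmap (1, y) = rmap (1, y) * rmap (1, x) := by
  apply Subtype.ext
  rw [Matrix.SpecialLinearGroup.coe_mul, Matrix.SpecialLinearGroup.coe_mul]
  show ret ((1 : unitInterval) : ℝ) _ _ _ _ * ret ((1 : unitInterval) : ℝ) _ _ _ _ =
    ret ((1 : unitInterval) : ℝ) _ _ _ _ * ret ((1 : unitInterval) : ℝ) _ _ _ _
  simp only [show ((1 : unitInterval) : ℝ) = 1 from rfl, ret_one]
  exact rot_comm _ _ _ _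

end SL2Retract

/-- Remark 4.9: `SL(2, ℝ)` is homotopy abelian (its commutator map is null-homotopic)
but not commutative. -/
theorem sl2R_homotopy_abelian_not_commutative :
    (commutatorMap (Matrix.SpecialLinearGroup (Fin 2) ℝ)).Nullhomotopic ∧
    ∃ x y : Matrix.SpecialLinearGroup (Fin 2) ℝ, x * y ≠ y * x := by
  constructor
  · refine ⟨1, ⟨?_⟩⟩
    refine
      { toFun := fun q => (SL2Retract.rmap (q.1, q.2.1))⁻¹ * (SL2Retract.rmap (q.1, q.2.2))⁻¹ *
          SL2Retract.rmap (q.1, q.2.1) * SL2Retract.rmap (q.1, q.2.2)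
        continuous_toFun := ?_
        map_zero_left := ?_
        map_one_left := ?_ }
    · have h1 : Continuous fun q : unitInterval × (SL2Retract.G × SL2Retract.G) =>
          SL2Retract.rmap (q.1, q.2.1) :=
        SL2Retract.rmap_continuous.comp
          (continuous_fst.prodMk (continuous_fst.comp continuous_snd))
      have h2 : Continuous fun q : unitInterval × (SL2Retract.G × SL2Retract.G) =>
          SL2Retract.rmap (q.1, q.2.2) :=
        SL2Retract.rmap_continuous.comp
          (continuous_fst.prodMk (continuous_snd.comp continuous_snd))
      exact ((h1.inv.mul h2.inv).mul h1).mul h2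
    · intro p
      simp only [SL2Retract.rmap_zero]
      rfl
    · intro p
      have h := SL2Retract.rmap_comm p.1 p.2
      set X := SL2Retract.rmap (1, p.1)
      set Y := SL2Retract.rmap (1, p.2)
      show X⁻¹ * Y⁻¹ * X * Y = _
      rw [mul_assoc, h, ← mul_assoc, mul_assoc X⁻¹, inv_mul_cancel, mul_one, inv_mul_cancel]
      rfl
  · refine ⟨⟨!![1, 1; 0, 1], by simp [Matrix.det_fin_two_of]⟩,
      ⟨!![1, 0; 1, 1], by simp [Matrix.det_fin_two_of]⟩, fun h => ?_⟩
    have h00 := congrArg (fun z : Matrix.SpecialLinearGroup (Fin 2) ℝ =>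
      (z : Matrix (Fin 2) (Fin 2) ℝ) 0 0) h
    change ((!![1, 1; 0, 1] * !![1, 0; 1, 1] : Matrix (Fin 2) (Fin 2) ℝ)) 0 0 =
      ((!![1, 0; 1, 1] * !![1, 1; 0, 1] : Matrix (Fin 2) (Fin 2) ℝ)) 0 0 at h00
    simp [Matrix.SpecialLinearGroup.coe_mul, Matrix.mul_apply, Fin.sum_univ_two] at h00
end
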